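/- If u : [0, T] → ℝ is continuous, nonnegative, and satisfies u(t)^2 ≤ u(0)^2 + ∫_0^t (C n(s) u(s)^2 + 2 u(s) g(s)) ds for all t ∈ [0, T], where n, g are nonnegative continuous functions, then u(t) ≤ exp(∫_0^t C n(s) ds)(u(0) + ∫_0^t g(s) ds) for all t ∈ [0, T]. -/

import Mathlib

open MeasureTheory Set intervalIntegral

/-- ε-perturbed strict version of the Grönwall energy lemma. -/
private lemma gronwall_energy_aux
    (T C : ℝ) (hT : 0 ≤ T) (hC : 0 ≤ C)
    (u n g : ℝ → ℝ)
    (hu : ContinuousOn u (Set.Icc 0 T))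
    (hn : ContinuousOn n (Set.Icc 0 T))
    (hg : ContinuousOn g (Set.Icc 0 T))
    (hu0 : ∀ t ∈ Set.Icc 0 T, 0 ≤ u t)
    (hn0 : ∀ t ∈ Set.Icc 0 T, 0 ≤ n t)
    (hg0 : ∀ t ∈ Set.Icc 0 T, 0 ≤ g t)
    (hineq : ∀ t ∈ Set.Icc 0 T,
      u t ^ 2 ≤ u 0 ^ 2 + ∫ s in (0 : ℝ)..t, (C * n s * u s ^ 2 + 2 * u s * g s))
    (ε : ℝ) (hε : 0 < ε) :
    ∀ t ∈ Set.Icc 0 T,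
      u t < Real.exp (∫ s in (0 : ℝ)..t, C * n s) * (u 0 + ε + ∫ s in (0 : ℝ)..t, g s) := by
  set N : ℝ → ℝ := fun t => ∫ s in (0:ℝ)..t, C * n s with hNdef
  set G : ℝ → ℝ := fun t => ∫ s in (0:ℝ)..t, g s with hGdef
  set ρ : ℝ → ℝ := fun t => Real.exp (N t) * (u 0 + ε + G t) with hρdef
  have huIcc : Set.uIcc (0:ℝ) T = Set.Icc 0 T := Set.uIcc_of_le hT
  have hCn : ContinuousOn (fun s => C * n s) (Set.Icc 0 T) := continuousOn_const.mul hn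
  have hNcont : ContinuousOn N (Set.Icc 0 T) := by
    rw [← huIcc]
    exact continuousOn_primitive_interval (by rw [huIcc]; exact hCn.integrableOn_Icc)
  have hGcont : ContinuousOn G (Set.Icc 0 T) := by
    rw [← huIcc]
    exact continuousOn_primitive_interval (by rw [huIcc]; exact hg.integrableOn_Icc)
  have hρcont : ContinuousOn ρ (Set.Icc 0 T) :=
    (Real.continuous_exp.comp_continuousOn hNcont).mul (continuousOn_const.add hGcont)
  have hGnonneg : ∀ t ∈ Set.Icc 0 T, 0 ≤ G t := fun t ht =>
    intervalIntegral.integral_nonneg ht.1 (fun s hs => hg0 s ⟨hs.1, hs.2.trans ht.2⟩)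
  have hNnonneg : ∀ t ∈ Set.Icc 0 T, 0 ≤ N t := fun t ht =>
    intervalIntegral.integral_nonneg ht.1
      (fun s hs => mul_nonneg hC (hn0 s ⟨hs.1, hs.2.trans ht.2⟩))
  have hu00 : 0 ≤ u 0 := hu0 0 ⟨le_refl 0, hT⟩
  have hρpos : ∀ t ∈ Set.Icc 0 T, 0 < ρ t := fun t ht =>
    mul_pos (Real.exp_pos _) (by have := hGnonneg t ht; linarith)
  by_contra hcon
  push_neg at hcon
  obtain ⟨t₀, ht₀, ht₀le⟩ := hcon
  set S : Set ℝ := {x ∈ Set.Icc 0 T | ρ x ≤ u x} with hSdef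
  have hSne : S.Nonempty := ⟨t₀, ht₀, ht₀le⟩
  have hSclosed : IsClosed S := isClosed_Icc.isClosed_le hρcont hu
  have hSbdd : BddBelow S := ⟨0, fun x hx => hx.1.1⟩
  set τ : ℝ := sInf S with hτdef
  have hτS : τ ∈ S := hSclosed.csInf_mem hSne hSbdd
  have hτIcc : τ ∈ Set.Icc 0 T := hτS.1
  have hτle : ρ τ ≤ u τ := hτS.2
  have hsubIcc : Set.Icc (0:ℝ) τ ⊆ Set.Icc 0 T := Set.Icc_subset_Icc le_rfl hτIcc.2
  have hsubuIcc : Set.uIcc (0:ℝ) τ ⊆ Set.Icc 0 T := by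
    rw [Set.uIcc_of_le hτIcc.1]; exact hsubIcc
  -- before τ we have u < ρ
  have hbefore : ∀ s ∈ Set.Ico (0:ℝ) τ, u s < ρ s := by
    intro s hs
    by_contra hle
    push_neg at hle
    have hsS : s ∈ S := ⟨⟨hs.1, hs.2.le.trans hτIcc.2⟩, hle⟩
    exact absurd (csInf_le hSbdd hsS) (not_le.2 hs.2)
  -- integrability facts on [0, τ]
  have hint1 : IntervalIntegrable (fun s => C * n s * u s ^ 2 + 2 * u s * g s) volume 0 τ := by
    apply ContinuousOn.intervalIntegrable
    exact (((continuousOn_const.mul (hn.mono hsubuIcc)).mul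
      (((hu.mono hsubuIcc)).pow 2)).add
      ((continuousOn_const.mul (hu.mono hsubuIcc)).mul (hg.mono hsubuIcc)))
  have hint2 : IntervalIntegrable (fun s => C * n s * ρ s ^ 2 + 2 * ρ s * g s) volume 0 τ := by
    apply ContinuousOn.intervalIntegrable
    exact (((continuousOn_const.mul (hn.mono hsubuIcc)).mul
      (((hρcont.mono hsubuIcc)).pow 2)).add
      ((continuousOn_const.mul (hρcont.mono hsubuIcc)).mul (hg.mono hsubuIcc)))
  have hint3 : IntervalIntegrable
      (fun s => 2 * ρ s * (C * n s * ρ s + Real.exp (N s) * g s)) volume 0 τ := by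
    apply ContinuousOn.intervalIntegrable
    exact ((continuousOn_const.mul (hρcont.mono hsubuIcc)).mul
      (((continuousOn_const.mul (hn.mono hsubuIcc)).mul (hρcont.mono hsubuIcc)).add
        ((Real.continuous_exp.comp_continuousOn (hNcont.mono hsubuIcc)).mul
          (hg.mono hsubuIcc))))
  -- step 2: compare integrands a.e.
  have key2 : (∫ s in (0:ℝ)..τ, (C * n s * u s ^ 2 + 2 * u s * g s))
      ≤ ∫ s in (0:ℝ)..τ, (C * n s * ρ s ^ 2 + 2 * ρ s * g s) := by
    apply intervalIntegral.integral_mono_ae_restrict hτIcc.1 hint1 hint2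
    rw [← Measure.restrict_congr_set (MeasureTheory.Ico_ae_eq_Icc (a := (0:ℝ)) (b := τ))]
    apply MeasureTheory.ae_restrict_of_forall_mem measurableSet_Ico
    intro s hs
    have hsT : s ∈ Set.Icc 0 T := ⟨hs.1, hs.2.le.trans hτIcc.2⟩
    have h1 : u s ≤ ρ s := (hbefore s hs).le
    have h2 : 0 ≤ u s := hu0 s hsT
    have h3 : 0 ≤ g s := hg0 s hsT
    have h4 : 0 ≤ C * n s := mul_nonneg hC (hn0 s hsT)
    have h5 : 0 ≤ ρ s := (hρpos s hsT).le
    show C * n s * u s ^ 2 + 2 * u s * g s ≤ C * n s * ρ s ^ 2 + 2 * ρ s * g s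
    have h6 : u s ^ 2 ≤ ρ s ^ 2 := pow_le_pow_left₀ h2 h1 2
    nlinarith [mul_nonneg h4 (sub_nonneg.2 h6), mul_nonneg h3 (sub_nonneg.2 h1)]
  -- step 3: bound by the derivative of ρ²
  have key3 : (∫ s in (0:ℝ)..τ, (C * n s * ρ s ^ 2 + 2 * ρ s * g s))
      ≤ ∫ s in (0:ℝ)..τ, 2 * ρ s * (C * n s * ρ s + Real.exp (N s) * g s) := by
    apply intervalIntegral.integral_mono_on hτIcc.1 hint2 hint3
    intro s hs
    have hsT : s ∈ Set.Icc 0 T := hsubIcc hs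
    have h3 : 0 ≤ g s := hg0 s hsT
    have h4 : 0 ≤ C * n s := mul_nonneg hC (hn0 s hsT)
    have h5 : 0 ≤ ρ s := (hρpos s hsT).le
    show C * n s * ρ s ^ 2 + 2 * ρ s * g s ≤ 2 * ρ s * (C * n s * ρ s + Real.exp (N s) * g s)
    have h6 : 1 ≤ Real.exp (N s) := Real.one_le_exp (hNnonneg s hsT)
    nlinarith [mul_nonneg h4 (mul_nonneg h5 h5), mul_nonneg (mul_nonneg h5 h3) (sub_nonneg.2 h6)]
  -- step 4: FTC for ρ²
  have key4 : (∫ s in (0:ℝ)..τ, 2 * ρ s * (C * n s * ρ s + Real.exp (N s) * g s))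
      = ρ τ ^ 2 - ρ 0 ^ 2 := by
    apply intervalIntegral.integral_eq_sub_of_hasDeriv_right_of_le hτIcc.1
      ((hρcont.mono hsubIcc).pow 2) _ hint3
    intro x hx
    have hxT : x ∈ Set.Ioo 0 T := ⟨hx.1, lt_of_lt_of_le hx.2 hτIcc.2⟩
    have hxIcc : x ∈ Set.Icc 0 T := Set.Ioo_subset_Icc_self hxT
    have hmemN : Set.Icc (0:ℝ) T ∈ nhds x := Icc_mem_nhds hxT.1 hxT.2
    have hNd : HasDerivAt N (C * n x) x := by
      apply intervalIntegral.integral_hasDerivAt_right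
      · apply ContinuousOn.intervalIntegrable
        apply hCn.mono
        rw [Set.uIcc_of_le hxIcc.1]
        exact Set.Icc_subset_Icc le_rfl hxIcc.2
      · exact ContinuousOn.stronglyMeasurableAtFilter isOpen_Ioo
          (hCn.mono Set.Ioo_subset_Icc_self) x hxT
      · exact hCn.continuousAt hmemN
    have hGd : HasDerivAt G (g x) x := by
      apply intervalIntegral.integral_hasDerivAt_right
      · apply ContinuousOn.intervalIntegrable
        apply hg.mono
        rw [Set.uIcc_of_le hxIcc.1]
        exact Set.Icc_subset_Icc le_rfl hxIcc.2
      · exact ContinuousOn.stronglyMeasurableAtFilter isOpen_Ioo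
          (hg.mono Set.Ioo_subset_Icc_self) x hxT
      · exact hg.continuousAt hmemN
    have hρd : HasDerivAt ρ (C * n x * ρ x + Real.exp (N x) * g x) x := by
      have h1 : HasDerivAt (fun t => Real.exp (N t)) (Real.exp (N x) * (C * n x)) x := hNd.exp
      have h2 : HasDerivAt (fun t => u 0 + ε + G t) (g x) x := hGd.const_add (u 0 + ε)
      have h3 : HasDerivAt (fun t => Real.exp (N t) * (u 0 + ε + G t))
          (Real.exp (N x) * (C * n x) * (u 0 + ε + G x) + Real.exp (N x) * g x) x := h1.mul h2
      convert h3 using 1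
      simp only [hρdef]
      ring
    have hsq : HasDerivAt (fun t => ρ t ^ 2)
        (2 * ρ x * (C * n x * ρ x + Real.exp (N x) * g x)) x := by
      have : HasDerivAt (fun t => ρ t ^ 2)
          (((2:ℕ):ℝ) * ρ x ^ (2 - 1) * (C * n x * ρ x + Real.exp (N x) * g x)) x := hρd.pow 2
      convert this using 1
      push_cast
      ring
    exact hsq.hasDerivWithinAt
  have hN0 : N 0 = 0 := intervalIntegral.integral_same
  have hG0 : G 0 = 0 := intervalIntegral.integral_same
  have hρ0 : ρ 0 = u 0 + ε := by simp [hρdef, hN0, hG0]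
  have hchain := hineq τ hτIcc
  have hρτ : ρ τ ^ 2 ≤ u τ ^ 2 := by
    apply pow_le_pow_left₀ (hρpos τ hτIcc).le hτle
  nlinarith [hρτ, hchain, key2, key3, key4]

/-- Grönwall-type lemma used to close the energy estimate: if `u ≥ 0` satisfies
`u(t)^2 ≤ u(0)^2 + ∫_0^t (C n(s) u(s)^2 + 2 u(s) g(s)) ds` on `[0, T]` with `n, g ≥ 0`
continuous, then `u(t) ≤ exp(∫_0^t C n(s) ds)(u(0) + ∫_0^t g(s) ds)`. -/
theorem gronwall_energy
    (T C : ℝ) (hT : 0 ≤ T) (hC : 0 ≤ C)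
    (u n g : ℝ → ℝ)
    (hu : ContinuousOn u (Set.Icc 0 T))
    (hn : ContinuousOn n (Set.Icc 0 T))
    (hg : ContinuousOn g (Set.Icc 0 T))
    (hu0 : ∀ t ∈ Set.Icc 0 T, 0 ≤ u t)
    (hn0 : ∀ t ∈ Set.Icc 0 T, 0 ≤ n t)
    (hg0 : ∀ t ∈ Set.Icc 0 T, 0 ≤ g t)
    (hineq : ∀ t ∈ Set.Icc 0 T,
      u t ^ 2 ≤ u 0 ^ 2 + ∫ s in (0 : ℝ)..t, (C * n s * u s ^ 2 + 2 * u s * g s)) :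
    ∀ t ∈ Set.Icc 0 T,
      u t ≤ Real.exp (∫ s in (0 : ℝ)..t, C * n s) * (u 0 + ∫ s in (0 : ℝ)..t, g s) := by
  intro t ht
  apply le_of_forall_pos_le_add
  intro δ hδ
  set E : ℝ := Real.exp (∫ s in (0:ℝ)..t, C * n s) with hE
  have hEpos : 0 < E := Real.exp_pos _
  have key := gronwall_energy_aux T C hT hC u n g hu hn hg hu0 hn0 hg0 hineq
    (δ / E) (div_pos hδ hEpos) t ht
  have hrw : E * (u 0 + δ / E + ∫ s in (0:ℝ)..t, g s)
      = E * (u 0 + ∫ s in (0:ℝ)..t, g s) + δ := by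
    field_simp
    ring
  rw [← hE] at key
  linarith [key, hrw.le, hrw.ge]
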